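/- Suppose S' is bounded, A > 0 is bounded, and A(x) → 0 as |x| → ∞. If Im λ ≠ 0, then λ ∉ Σ_∞(p); i.e., there do not exist sequences (x_j, ξ_j) with |(x_j, ξ_j)| → ∞ and unit vectors u_j ∈ ℂ² such that |(p(x_j, ξ_j) − λI)u_j| → 0. In particular Σ_∞(p) ⊆ ℝ. -/

import Mathlib

open Complex Matrix Filter Topology

section Aux

private lemma zs_realT (ξ t : ℝ) : |ξ| - |t| ≤ |ξ + t| := by
  have h := abs_add_le (ξ + t) (-t)
  rw [add_neg_cancel_right, abs_neg] at h
  linarith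

private lemma zs_key1 (ξ s a : ℝ) (lam x y v0 v1 : ℂ)
    (h0 : v0 = (-(ξ:ℂ) - (s:ℂ)/2 - lam) * x + (-Complex.I * (a:ℂ)) * y)
    (h1 : v1 = (-Complex.I * (a:ℂ)) * x + ((ξ:ℂ) - (s:ℂ)/2 - lam) * y) :
    |lam.im| * (‖x‖ ^ 2 + ‖y‖ ^ 2) ≤
      ‖v0‖ * ‖x‖ + ‖v1‖ * ‖y‖
        + 2 * |a| * (‖x‖ * ‖y‖) := by
  have hid : lam.im * (‖x‖ ^ 2 + ‖y‖ ^ 2)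
      = -((starRingEnd ℂ x * v0 + starRingEnd ℂ y * v1).im)
        - 2 * a * ((starRingEnd ℂ x * y).re) := by
    subst h0 h1
    have hx : ‖x‖ ^ 2 = x.re ^ 2 + x.im ^ 2 := by
      rw [Complex.sq_norm, Complex.normSq_apply]; ring
    have hy : ‖y‖ ^ 2 = y.re ^ 2 + y.im ^ 2 := by
      rw [Complex.sq_norm, Complex.normSq_apply]; ring
    rw [hx, hy]
    simp [Complex.add_im, Complex.mul_im, Complex.mul_re, Complex.sub_re, Complex.sub_im,
      Complex.neg_re, Complex.neg_im, Complex.div_ofNat_im, Complex.div_ofNat_re]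
    ring
  have h2 : |lam.im * (‖x‖ ^ 2 + ‖y‖ ^ 2)| ≤
      ‖starRingEnd ℂ x * v0 + starRingEnd ℂ y * v1‖
        + 2 * |a| * |(starRingEnd ℂ x * y).re| := by
    rw [hid]
    calc |(-((starRingEnd ℂ x * v0 + starRingEnd ℂ y * v1).im)
        - 2 * a * ((starRingEnd ℂ x * y).re))|
        = |((starRingEnd ℂ x * v0 + starRingEnd ℂ y * v1).im)
          + 2 * a * ((starRingEnd ℂ x * y).re)| := by
          rw [show -((starRingEnd ℂ x * v0 + starRingEnd ℂ y * v1).im)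
            - 2 * a * ((starRingEnd ℂ x * y).re)
            = -(((starRingEnd ℂ x * v0 + starRingEnd ℂ y * v1).im)
            + 2 * a * ((starRingEnd ℂ x * y).re)) by ring, abs_neg]
      _ ≤ |(starRingEnd ℂ x * v0 + starRingEnd ℂ y * v1).im|
          + |2 * a * ((starRingEnd ℂ x * y).re)| := abs_add_le _ _
      _ ≤ _ := by
          gcongr
          · exact Complex.abs_im_le_norm _
          · rw [abs_mul, abs_mul, _root_.abs_two]
  have h3 : ‖starRingEnd ℂ x * v0 + starRingEnd ℂ y * v1‖
      ≤ ‖v0‖ * ‖x‖ + ‖v1‖ * ‖y‖ := by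
    calc ‖starRingEnd ℂ x * v0 + starRingEnd ℂ y * v1‖
        ≤ ‖starRingEnd ℂ x * v0‖ + ‖starRingEnd ℂ y * v1‖ :=
          norm_add_le _ _
      _ = _ := by simp [norm_mul, Complex.norm_conj]; ring
  have h4 : |(starRingEnd ℂ x * y).re| ≤ ‖x‖ * ‖y‖ := by
    calc |(starRingEnd ℂ x * y).re| ≤ ‖starRingEnd ℂ x * y‖ :=
        Complex.abs_re_le_norm _
      _ = _ := by simp [norm_mul, Complex.norm_conj]
  have h5 : |lam.im| * (‖x‖ ^ 2 + ‖y‖ ^ 2)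
      = |lam.im * (‖x‖ ^ 2 + ‖y‖ ^ 2)| := by
    rw [abs_mul, _root_.abs_of_nonneg
      (by positivity : (0:ℝ) ≤ ‖x‖ ^ 2 + ‖y‖ ^ 2)]
  rw [h5]
  nlinarith [h2, h3, h4, abs_nonneg a]

private lemma zs_key2 (ξ s a : ℝ) (lam x y v0 v1 : ℂ)
    (h0 : v0 = (-(ξ:ℂ) - (s:ℂ)/2 - lam) * x + (-Complex.I * (a:ℂ)) * y)
    (h1 : v1 = (-Complex.I * (a:ℂ)) * x + ((ξ:ℂ) - (s:ℂ)/2 - lam) * y) :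
    (|ξ| - |s|/2 - ‖lam‖ - |a|) * (‖x‖ + ‖y‖) ≤
      ‖v0‖ + ‖v1‖ := by
  set c0 : ℂ := -(ξ:ℂ) - (s:ℂ)/2 - lam with hc0
  set c1 : ℂ := (ξ:ℂ) - (s:ℂ)/2 - lam with hc1
  have hre0 : c0.re = -ξ - s/2 - lam.re := by
    simp [hc0, Complex.sub_re, Complex.neg_re, Complex.div_ofNat_re]
  have hre1 : c1.re = ξ - s/2 - lam.re := by
    simp [hc1, Complex.sub_re, Complex.div_ofNat_re]
  have hsplit : |s/2 + lam.re| ≤ |s|/2 + ‖lam‖ := by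
    have h1 := abs_add_le (s/2) lam.re
    have h2 : |s/2| = |s|/2 := by rw [abs_div]; norm_num
    have h3 := Complex.abs_re_le_norm lam
    linarith
  have hT0 : |ξ| - |s|/2 - ‖lam‖ ≤ ‖c0‖ := by
    have h := Complex.abs_re_le_norm c0
    rw [hre0] at h
    have he : |(-ξ - s/2 - lam.re)| = |ξ + (s/2 + lam.re)| := by
      rw [show -ξ - s/2 - lam.re = -(ξ + (s/2 + lam.re)) by ring, abs_neg]
    have := zs_realT ξ (s/2 + lam.re)
    linarith [he ▸ h]
  have hT1 : |ξ| - |s|/2 - ‖lam‖ ≤ ‖c1‖ := by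
    have h := Complex.abs_re_le_norm c1
    rw [hre1] at h
    have he : |(ξ - s/2 - lam.re)| = |ξ + (-(s/2 + lam.re))| := by ring_nf
    have h4 := zs_realT ξ (-(s/2 + lam.re))
    rw [abs_neg] at h4
    linarith [he ▸ h]
  have habs : ‖(-Complex.I * (a:ℂ))‖ = |a| := by simp
  have e0 : ‖c0‖ * ‖x‖ ≤ ‖v0‖ + |a| * ‖y‖ := by
    have hcx : c0 * x = v0 - (-Complex.I * (a:ℂ)) * y := by rw [h0]; ring
    calc ‖c0‖ * ‖x‖ = ‖c0 * x‖ := (norm_mul _ _).symm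
      _ = ‖v0 - (-Complex.I * (a:ℂ)) * y‖ := by rw [hcx]
      _ ≤ ‖v0‖ + ‖(-Complex.I * (a:ℂ)) * y‖ := by
          have := norm_sub_le v0 ((-Complex.I * (a:ℂ)) * y)
          simpa using this
      _ = ‖v0‖ + |a| * ‖y‖ := by rw [norm_mul, habs]
  have e1 : ‖c1‖ * ‖y‖ ≤ ‖v1‖ + |a| * ‖x‖ := by
    have hcy : c1 * y = v1 - (-Complex.I * (a:ℂ)) * x := by rw [h1]; ring
    calc ‖c1‖ * ‖y‖ = ‖c1 * y‖ := (norm_mul _ _).symm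
      _ = ‖v1 - (-Complex.I * (a:ℂ)) * x‖ := by rw [hcy]
      _ ≤ ‖v1‖ + ‖(-Complex.I * (a:ℂ)) * x‖ := by
          have := norm_sub_le v1 ((-Complex.I * (a:ℂ)) * x)
          simpa using this
      _ = ‖v1‖ + |a| * ‖x‖ := by rw [norm_mul, habs]
  nlinarith [norm_nonneg x, norm_nonneg y, e0, e1,
    mul_le_mul_of_nonneg_right hT0 (norm_nonneg x),
    mul_le_mul_of_nonneg_right hT1 (norm_nonneg y)]

private lemma zs_pi_norm_le (f : Fin 2 → ℂ) : ‖f‖ ≤ ‖f 0‖ + ‖f 1‖ := by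
  apply pi_norm_le_iff_of_nonneg (by positivity) |>.mpr
  intro i
  fin_cases i
  · simp
  · simp

private lemma zs_pi_norm_sq_le (f : Fin 2 → ℂ) : ‖f‖^2 ≤ ‖f 0‖^2 + ‖f 1‖^2 := by
  have h : ‖f‖ ≤ Real.sqrt (‖f 0‖^2 + ‖f 1‖^2) := by
    apply pi_norm_le_iff_of_nonneg (Real.sqrt_nonneg _) |>.mpr
    intro i
    rw [Real.le_sqrt (norm_nonneg _)]
    · fin_cases i
      · simp
      · simp
    · positivity
  calc ‖f‖^2 ≤ Real.sqrt (‖f 0‖^2 + ‖f 1‖^2)^2 := by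
        apply pow_le_pow_left₀ (norm_nonneg _) h
    _ = _ := Real.sq_sqrt (by positivity)

end Aux

/-- The symbol of the Zakharov–Shabat operator. -/
noncomputable def zsSymbol (A : ℝ → ℝ) (S' : ℝ → ℝ) (w : ℝ × ℝ) : Matrix (Fin 2) (Fin 2) ℂ :=
  !![-(w.2 : ℂ) - (S' w.1) / 2, -Complex.I * A w.1;
     -Complex.I * A w.1, (w.2 : ℂ) - (S' w.1) / 2]

theorem stmt_18 (A S : ℝ → ℝ)
    (hAcont : Continuous A) (hApos : ∀ x, 0 < A x)
    (MA : ℝ) (hMA : ∀ x, |A x| ≤ MA)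
    (hAdecay : Tendsto A (cocompact ℝ) (𝓝 0))
    (hS'cont : Continuous (deriv S)) (MS : ℝ) (hMS : ∀ x, |deriv S x| ≤ MS)
    (lam : ℂ) (him : lam.im ≠ 0) :
    ¬ ∃ (w : ℕ → ℝ × ℝ) (u : ℕ → (Fin 2 → ℂ)),
        (∀ j, u j ≠ 0)
        ∧ Tendsto (fun j => ‖w j‖) atTop atTop
        ∧ Tendsto
            (fun j => ‖(zsSymbol A (deriv S) (w j)).mulVec (u j) - lam • (u j)‖ / ‖u j‖)
            atTop (𝓝 0) := by
  rintro ⟨w, u, hu, hw, hlim⟩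
  set S' : ℝ → ℝ := deriv S with hS'
  set v : ℕ → Fin 2 → ℂ := fun j => (zsSymbol A S' (w j)).mulVec (u j) - lam • (u j) with hv
  set N : ℕ → ℝ := fun j => ‖u j‖ with hN
  set E : ℕ → ℝ := fun j => ‖v j‖ with hE
  set r : ℕ → ℝ := fun j => E j / N j with hr
  have hNpos : ∀ j, 0 < N j := fun j => norm_pos_iff.mpr (hu j)
  have hrnn : ∀ j, 0 ≤ r j := fun j => div_nonneg (norm_nonneg _) (norm_nonneg _)
  have hlim' : Tendsto r atTop (𝓝 0) := hlim
  -- component formulas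
  have hv0 : ∀ j, v j 0 = (-((w j).2 :ℂ) - ((S' (w j).1 : ℝ):ℂ)/2 - lam) * (u j 0)
      + (-Complex.I * ((A (w j).1 : ℝ):ℂ)) * (u j 1) := by
    intro j
    simp [hv, zsSymbol, Matrix.mulVec, dotProduct, Fin.sum_univ_two, Matrix.vecHead, Matrix.vecTail, Pi.smul_apply, smul_eq_mul]
    ring
  have hv1 : ∀ j, v j 1 = (-Complex.I * ((A (w j).1 : ℝ):ℂ)) * (u j 0)
      + (((w j).2:ℂ) - ((S' (w j).1 : ℝ):ℂ)/2 - lam) * (u j 1) := by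
    intro j
    simp [hv, zsSymbol, Matrix.mulVec, dotProduct, Fin.sum_univ_two, Matrix.vecHead, Matrix.vecTail, Pi.smul_apply, smul_eq_mul]
    ring
  -- basic norm bounds
  have habs0 : ∀ j, ‖u j 0‖ ≤ N j := fun j => norm_le_pi_norm (u j) 0
  have habs1 : ∀ j, ‖u j 1‖ ≤ N j := fun j => norm_le_pi_norm (u j) 1
  have hvabs0 : ∀ j, ‖v j 0‖ ≤ E j := fun j => norm_le_pi_norm (v j) 0
  have hvabs1 : ∀ j, ‖v j 1‖ ≤ E j := fun j => norm_le_pi_norm (v j) 1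
  have hNsum : ∀ j, N j ≤ ‖u j 0‖ + ‖u j 1‖ :=
    fun j => zs_pi_norm_le (u j)
  have hNsq : ∀ j, N j ^ 2 ≤ ‖u j 0‖ ^ 2 + ‖u j 1‖ ^ 2 :=
    fun j => zs_pi_norm_sq_le (u j)
  -- key inequality (i): |Im lam| ≤ 2 r j + 2 A (x j)
  have hkey1 : ∀ j, |lam.im| ≤ 2 * r j + 2 * A (w j).1 := by
    intro j
    have h := zs_key1 (w j).2 (S' (w j).1) (A (w j).1) lam (u j 0) (u j 1) (v j 0) (v j 1)
      (hv0 j) (hv1 j)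
    have hApos' : |A (w j).1| = A (w j).1 := _root_.abs_of_pos (hApos _)
    rw [hApos'] at h
    have hNj := hNpos j
    have h2 : |lam.im| * N j ^ 2 ≤ 2 * E j * N j + 2 * A (w j).1 * N j ^ 2 := by
      have hEnn : (0:ℝ) ≤ E j := norm_nonneg _
      nlinarith [mul_le_mul_of_nonneg_left (hNsq j) (abs_nonneg lam.im),
        mul_le_mul (hvabs0 j) (habs0 j) (norm_nonneg _) hEnn,
        mul_le_mul (hvabs1 j) (habs1 j) (norm_nonneg _) hEnn,
        mul_le_mul_of_nonneg_left
          (mul_le_mul (habs0 j) (habs1 j) (norm_nonneg _) (hNpos j).le)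
          (by linarith [(hApos (w j).1).le] : (0:ℝ) ≤ 2 * A (w j).1)]
    have hEr : E j = r j * N j := (div_mul_cancel₀ _ (hNpos j).ne').symm
    rw [hEr] at h2
    nlinarith [hNpos j, h2, mul_pos (hNpos j) (hNpos j)]
  -- key inequality (ii): |ξ j| ≤ MS/2 + |lam| + MA + 2 r j
  have hkey2 : ∀ j, |(w j).2| ≤ MS / 2 + ‖lam‖ + MA + 2 * r j := by
    intro j
    by_cases hc : |(w j).2| ≤ MS / 2 + ‖lam‖ + MA
    · linarith [hrnn j]
    · push_neg at hc
      have h := zs_key2 (w j).2 (S' (w j).1) (A (w j).1) lam (u j 0) (u j 1) (v j 0) (v j 1)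
        (hv0 j) (hv1 j)
      have hT : 0 < |(w j).2| - |S' (w j).1|/2 - ‖lam‖ - |A (w j).1| := by
        have := hMS (w j).1
        have := hMA (w j).1
        linarith
      have h3 : (|(w j).2| - |S' (w j).1|/2 - ‖lam‖ - |A (w j).1|) * N j ≤ 2 * E j := by
        calc (|(w j).2| - |S' (w j).1|/2 - ‖lam‖ - |A (w j).1|) * N j
            ≤ (|(w j).2| - |S' (w j).1|/2 - ‖lam‖ - |A (w j).1|)
              * (‖u j 0‖ + ‖u j 1‖) := by
              apply mul_le_mul_of_nonneg_left (hNsum j) hT.le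
          _ ≤ ‖v j 0‖ + ‖v j 1‖ := h
          _ ≤ 2 * E j := by linarith [hvabs0 j, hvabs1 j]
      have hEr : E j = r j * N j := (div_mul_cancel₀ _ (hNpos j).ne').symm
      rw [hEr] at h3
      have h4 : |(w j).2| - |S' (w j).1|/2 - ‖lam‖ - |A (w j).1| ≤ 2 * r j := by
        nlinarith [hNpos j, h3, mul_pos (hNpos j) (hNpos j)]
      have := hMS (w j).1
      have := hMA (w j).1
      linarith
  -- eventually r j < 1, so eventually |ξ j| bounded; hence |x j| → ∞
  have hrev : ∀ᶠ j in atTop, r j < 1 := hlim'.eventually (Iio_mem_nhds one_pos)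
  set C : ℝ := MS / 2 + ‖lam‖ + MA + 2 with hC
  have hxatTop : Tendsto (fun j => |(w j).1|) atTop atTop := by
    rw [tendsto_atTop]
    intro M
    have hwev : ∀ᶠ j in atTop, max M (C + 1) ≤ ‖w j‖ := hw.eventually_ge_atTop _
    filter_upwards [hwev, hrev] with j h1 h2
    have hxi : |(w j).2| ≤ C := by
      have := hkey2 j
      simp only [hC]
      linarith
    have hnorm : ‖w j‖ = max |(w j).1| |(w j).2| := by
      rw [Prod.norm_def, Real.norm_eq_abs, Real.norm_eq_abs]
    rw [hnorm] at h1
    rcases max_cases |(w j).1| |(w j).2| with ⟨heq, _⟩ | ⟨heq, _⟩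
    · calc M ≤ max M (C+1) := le_max_left _ _
        _ ≤ _ := heq ▸ h1
    · exfalso
      have : C + 1 ≤ |(w j).2| := le_trans (le_max_right _ _) (heq ▸ h1)
      linarith
  have hxc : Tendsto (fun j => (w j).1) atTop (cocompact ℝ) := by
    apply tendsto_cocompact_of_tendsto_dist_comp_atTop (0:ℝ)
    simpa [Real.dist_eq] using hxatTop
  have hA0 : Tendsto (fun j => A (w j).1) atTop (𝓝 0) := hAdecay.comp hxc
  have hfin : Tendsto (fun j => 2 * r j + 2 * A (w j).1) atTop (𝓝 0) := by
    have := (hlim'.const_mul 2).add (hA0.const_mul 2)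
    simpa using this
  have hle : |lam.im| ≤ 0 := ge_of_tendsto hfin (Eventually.of_forall hkey1)
  exact absurd (abs_pos.mpr him) (not_lt.mpr hle)
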